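/- Let A and B be Hermitian n×n complex matrices with ‖B‖ ≤ 1, and let ε > 0. Then C_ε(A) ≤ C_ε(B·A·B). -/

import Mathlib

open Matrix

/-- Number of eigenvalues (with multiplicity) of a Hermitian matrix in the open
interval `(a, b)`. -/
noncomputable def eigCountIoo {n : Type*} [Fintype n] [DecidableEq n]
    (M : Matrix n n ℂ) (a b : ℝ) : ℕ :=
  if hM : M.IsHermitian then Nat.card {i : n // hM.eigenvalues i ∈ Set.Ioo a b} else 0

/-- The operator (spectral) norm of a matrix, i.e. the norm of the induced operator
between Euclidean spaces. -/
noncomputable def matNorm {m n : Type*} [Fintype m] [Fintype n] [DecidableEq n]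
    (M : Matrix m n ℂ) : ℝ :=
  ‖LinearMap.toContinuousLinearMap (Matrix.toEuclideanLin M)‖

private lemma nsq_eq {n : ℕ} (b : OrthonormalBasis (Fin n) ℂ (EuclideanSpace ℂ (Fin n)))
    (x : EuclideanSpace ℂ (Fin n)) : ‖x‖^2 = ∑ i, ‖b.repr x i‖^2 := by
  rw [← b.repr.norm_map x, EuclideanSpace.norm_eq, Real.sq_sqrt]
  positivity

private lemma key_repr {n : ℕ} {C : Matrix (Fin n) (Fin n) ℂ} (hC : C.IsHermitian)
    (x : EuclideanSpace ℂ (Fin n)) (i : Fin n) :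
    hC.eigenvectorBasis.repr (toEuclideanLin C x) i
      = (hC.eigenvalues i : ℂ) * hC.eigenvectorBasis.repr x i := by
  rw [OrthonormalBasis.repr_apply_apply, OrthonormalBasis.repr_apply_apply]
  have hsym := (isHermitian_iff_isSymmetric.mp hC)
  rw [← hsym (hC.eigenvectorBasis i) x]
  have heig : toEuclideanLin C (hC.eigenvectorBasis i)
      = (hC.eigenvalues i : ℂ) • hC.eigenvectorBasis i := by
    have h := hC.mulVec_eigenvectorBasis i
    rw [toEuclideanLin_apply]
    ext j
    simp only [WithLp.equiv_symm_apply, PiLp.toLp_apply]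
    have := congrFun h j
    simpa using this
  rw [heig, inner_smul_left]
  simp

set_option maxHeartbeats 1000000 in
/-- Core analytic lemma: if `x` is supported on big eigenvalues of `B*A*B` and
`B x` is supported on small eigenvalues of `A`, then `x = 0`. -/
private lemma core_zero {n : ℕ} {A B : Matrix (Fin n) (Fin n) ℂ}
    (hA : A.IsHermitian) (hM : (B * A * B).IsHermitian)
    (hBle : ∀ v : EuclideanSpace ℂ (Fin n), ‖toEuclideanLin B v‖ ≤ ‖v‖)
    {ε : ℝ} (hε : 0 < ε) (x : EuclideanSpace ℂ (Fin n))
    (h1 : ∀ i, hM.eigenvalues i ∈ Set.Ioo (-ε) ε → hM.eigenvectorBasis.repr x i = 0)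
    (h2 : ∀ j, hA.eigenvalues j ∉ Set.Ioo (-ε) ε →
      hA.eigenvectorBasis.repr (toEuclideanLin B x) j = 0) :
    x = 0 := by
  set y : EuclideanSpace ℂ (Fin n) := toEuclideanLin B x with hy
  set z : EuclideanSpace ℂ (Fin n) := toEuclideanLin A y with hz
  set w : EuclideanSpace ℂ (Fin n) := toEuclideanLin B z with hw
  have hwM : w = toEuclideanLin (B * A * B) x := by
    rw [hw, hz, hy]
    simp only [toEuclideanLin_apply]
    simp [mulVec_mulVec, Matrix.mul_assoc]
  have hE1 : ε^2 * ‖x‖^2 ≤ ‖w‖^2 := by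
    rw [nsq_eq hM.eigenvectorBasis w, nsq_eq hM.eigenvectorBasis x, Finset.mul_sum]
    apply Finset.sum_le_sum
    intro i _
    rw [hwM, key_repr hM x i]
    rw [norm_mul, mul_pow, Complex.norm_real, Real.norm_eq_abs, sq_abs]
    by_cases hi : hM.eigenvalues i ∈ Set.Ioo (-ε) ε
    · rw [h1 i hi]; simp
    · simp only [Set.mem_Ioo, not_and_or, not_lt] at hi
      have : ε^2 ≤ (hM.eigenvalues i)^2 := by
        rcases hi with h | h <;> nlinarith
      exact mul_le_mul_of_nonneg_right this (by positivity)
  have hE3 : ‖z‖^2 ≤ ε^2 * ‖y‖^2 := by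
    rw [nsq_eq hA.eigenvectorBasis z, nsq_eq hA.eigenvectorBasis y, Finset.mul_sum]
    apply Finset.sum_le_sum
    intro j _
    rw [hz, key_repr hA y j]
    rw [norm_mul, mul_pow, Complex.norm_real, Real.norm_eq_abs, sq_abs]
    by_cases hj : hA.eigenvalues j ∈ Set.Ioo (-ε) ε
    · obtain ⟨ha, hb⟩ := hj
      have : (hA.eigenvalues j)^2 ≤ ε^2 := by nlinarith
      exact mul_le_mul_of_nonneg_right this (by positivity)
    · rw [h2 j hj]; simp
  have hwz : ‖w‖ ≤ ‖z‖ := hBle z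
  have hyx : ‖y‖ ≤ ‖x‖ := hBle x
  have hy2 : ‖y‖^2 ≤ ‖x‖^2 := pow_le_pow_left₀ (norm_nonneg y) hyx 2
  have hw2 : ‖w‖^2 ≤ ‖z‖^2 := pow_le_pow_left₀ (norm_nonneg w) hwz 2
  have hchain : ε^2 * ‖y‖^2 ≤ ‖z‖^2 := by
    have h1' : ε^2 * ‖y‖^2 ≤ ε^2 * ‖x‖^2 :=
      mul_le_mul_of_nonneg_left hy2 (sq_nonneg ε)
    linarith
  have heq : ‖z‖^2 = ε^2 * ‖y‖^2 := le_antisymm hE3 hchain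
  have hsum0 : ∑ j, (ε^2 - (hA.eigenvalues j)^2) * ‖hA.eigenvectorBasis.repr y j‖^2 = 0 := by
    have expand : ∑ j, (ε^2 - (hA.eigenvalues j)^2) * ‖hA.eigenvectorBasis.repr y j‖^2
        = ε^2 * ‖y‖^2 - ‖z‖^2 := by
      rw [nsq_eq hA.eigenvectorBasis z, nsq_eq hA.eigenvectorBasis y, Finset.mul_sum,
        ← Finset.sum_sub_distrib]
      apply Finset.sum_congr rfl
      intro j _
      rw [hz, key_repr hA y j, norm_mul, mul_pow, Complex.norm_real,
        Real.norm_eq_abs, sq_abs]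
      ring
    rw [expand, heq]; ring
  have hterm : ∀ j ∈ Finset.univ,
      0 ≤ (ε^2 - (hA.eigenvalues j)^2) * ‖hA.eigenvectorBasis.repr y j‖^2 := by
    intro j _
    by_cases hj : hA.eigenvalues j ∈ Set.Ioo (-ε) ε
    · obtain ⟨ha, hb⟩ := hj
      have : 0 ≤ ε^2 - (hA.eigenvalues j)^2 := by nlinarith
      positivity
    · rw [h2 j hj]; simp
  have hall := (Finset.sum_eq_zero_iff_of_nonneg hterm).mp hsum0
  have hyeq : ∀ j, hA.eigenvectorBasis.repr y j = 0 := by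
    intro j
    by_cases hj : hA.eigenvalues j ∈ Set.Ioo (-ε) ε
    · obtain ⟨ha, hb⟩ := hj
      have hpos : 0 < ε^2 - (hA.eigenvalues j)^2 := by nlinarith
      have hzero := hall j (Finset.mem_univ j)
      have hnz : ‖hA.eigenvectorBasis.repr y j‖^2 = 0 := by
        by_contra hcon
        have : 0 < ‖hA.eigenvectorBasis.repr y j‖^2 :=
          lt_of_le_of_ne (by positivity) (Ne.symm hcon)
        nlinarith
      simpa using hnz
    · exact h2 j hj
  have hy0 : y = 0 := by
    have h : hA.eigenvectorBasis.repr y = 0 := by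
      ext j; simpa using hyeq j
    have := congrArg hA.eigenvectorBasis.repr.symm h
    simpa using this
  have hw0 : w = 0 := by rw [hw, hz, hy0]; simp
  rw [hw0] at hE1
  have hE1' : ε ^ 2 * ‖x‖ ^ 2 ≤ 0 := by simpa using hE1
  have hx : ‖x‖ = 0 := by
    by_contra hne
    have hpos : 0 < ‖x‖ := lt_of_le_of_ne (norm_nonneg x) (Ne.symm hne)
    have : 0 < ε ^ 2 * ‖x‖ ^ 2 := by positivity
    linarith
  simpa using hx

set_option maxHeartbeats 1000000 in
theorem stmt10 {n : ℕ} (A B : Matrix (Fin n) (Fin n) ℂ)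
    (hA : A.IsHermitian) (hB : B.IsHermitian) (hBn : matNorm B ≤ 1)
    (ε : ℝ) (hε : 0 < ε) :
    eigCountIoo A (-ε) ε ≤ eigCountIoo (B * A * B) (-ε) ε := by
  classical
  have hM : (B * A * B).IsHermitian := by
    have : (B * A * B)ᴴ = B * A * B := by
      rw [conjTranspose_mul, conjTranspose_mul, hA.eq, hB.eq, Matrix.mul_assoc]
    exact this
  set S : Finset (Fin n) :=
    Finset.univ.filter (fun i => hA.eigenvalues i ∈ Set.Ioo (-ε) ε) with hS
  set S' : Finset (Fin n) :=
    Finset.univ.filter (fun i => ¬ (hA.eigenvalues i ∈ Set.Ioo (-ε) ε)) with hS'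
  set T : Finset (Fin n) :=
    Finset.univ.filter (fun i => ¬ (hM.eigenvalues i ∈ Set.Ioo (-ε) ε)) with hT
  set SM : Finset (Fin n) :=
    Finset.univ.filter (fun i => hM.eigenvalues i ∈ Set.Ioo (-ε) ε) with hSM
  have hcountA : eigCountIoo A (-ε) ε = S.card := by
    rw [eigCountIoo, dif_pos hA, Nat.card_eq_fintype_card]
    simp [hS, Fintype.card_subtype]
  have hcountM : eigCountIoo (B * A * B) (-ε) ε = SM.card := by
    rw [eigCountIoo, dif_pos hM, Nat.card_eq_fintype_card]
    simp [hSM, Fintype.card_subtype]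
  rw [hcountA, hcountM]
  have hBle : ∀ v : EuclideanSpace ℂ (Fin n), ‖toEuclideanLin B v‖ ≤ ‖v‖ := by
    intro v
    have h1 := (LinearMap.toContinuousLinearMap (toEuclideanLin B)).le_opNorm v
    have h2 : (LinearMap.toContinuousLinearMap (toEuclideanLin B)) v
        = toEuclideanLin B v := rfl
    rw [h2] at h1
    calc ‖toEuclideanLin B v‖ ≤ matNorm B * ‖v‖ := h1
      _ ≤ 1 * ‖v‖ := mul_le_mul_of_nonneg_right hBn (norm_nonneg v)
      _ = ‖v‖ := one_mul _
  set extL : (↥T → ℂ) →ₗ[ℂ] EuclideanSpace ℂ (Fin n) :=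
    { toFun := fun c => (WithLp.equiv 2 (Fin n → ℂ)).symm
        (fun i => if h : i ∈ T then c ⟨i, h⟩ else 0)
      map_add' := by
        intro c d; ext i; by_cases h : i ∈ T <;> simp [h]
      map_smul' := by
        intro a c; ext i; by_cases h : i ∈ T <;> simp [h] } with hextL
  set res : EuclideanSpace ℂ (Fin n) →ₗ[ℂ] (↥S' → ℂ) :=
    { toFun := fun y j => hA.eigenvectorBasis.repr y j.val
      map_add' := by intro y z; funext j; simp
      map_smul' := by intro a y; funext j; simp } with hres
  set g : (↥T → ℂ) →ₗ[ℂ] (↥S' → ℂ) :=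
    res ∘ₗ (toEuclideanLin B) ∘ₗ hM.eigenvectorBasis.repr.symm.toLinearMap ∘ₗ extL with hg
  have hginj : Function.Injective g := by
    rw [injective_iff_map_eq_zero]
    intro c hc
    set x : EuclideanSpace ℂ (Fin n) := hM.eigenvectorBasis.repr.symm (extL c) with hx
    have hreprx : hM.eigenvectorBasis.repr x = extL c := by
      rw [hx]; exact hM.eigenvectorBasis.repr.apply_symm_apply _
    have h1 : ∀ i, hM.eigenvalues i ∈ Set.Ioo (-ε) ε →
        hM.eigenvectorBasis.repr x i = 0 := by
      intro i hi
      have hiT : i ∉ T := by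
        simp only [hT, Finset.mem_filter, Finset.mem_univ, true_and, not_not]
        exact hi
      rw [hreprx]
      simp only [hextL, LinearMap.coe_mk, AddHom.coe_mk, WithLp.equiv_symm_apply, PiLp.toLp_apply]
      rw [dif_neg hiT]
    have h2 : ∀ j, hA.eigenvalues j ∉ Set.Ioo (-ε) ε →
        hA.eigenvectorBasis.repr (toEuclideanLin B x) j = 0 := by
      intro j hj
      have hjS : j ∈ S' := by
        simp only [hS', Finset.mem_filter, Finset.mem_univ, true_and]
        exact hj
      have := congrFun hc ⟨j, hjS⟩
      simpa [hg, hres, hx] using this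
    have hx0 : x = 0 := core_zero hA hM hBle hε x h1 h2
    funext j
    have hc0 : extL c = 0 := by rw [← hreprx, hx0, map_zero]
    have happ := congrFun (congrArg (WithLp.equiv 2 (Fin n → ℂ)) hc0) j.val
    simp only [hextL, LinearMap.coe_mk, AddHom.coe_mk, Equiv.apply_symm_apply] at happ
    rw [dif_pos j.property] at happ
    simpa using happ
  have hcard : T.card ≤ S'.card := by
    have h1 : Module.finrank ℂ (↥T → ℂ) ≤ Module.finrank ℂ (↥S' → ℂ) :=
      LinearMap.finrank_le_finrank_of_injective hginj
    simpa [Module.finrank_fintype_fun_eq_card, Fintype.card_coe] using h1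
  have hA' : S.card + S'.card = n := by
    have := Finset.card_filter_add_card_filter_not
      (s := Finset.univ) (p := fun i => hA.eigenvalues i ∈ Set.Ioo (-ε) ε)
    simpa [hS, hS'] using this
  have hM' : SM.card + T.card = n := by
    have := Finset.card_filter_add_card_filter_not
      (s := Finset.univ) (p := fun i => hM.eigenvalues i ∈ Set.Ioo (-ε) ε)
    simpa [hSM, hT] using this
  omega
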